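/- Let m ≥ 2 be an integer with prime factorization m = p_1^{r_1} p_2^{r_2} ⋯ p_j^{r_j}, let G be a finite commutative group, and set m_i = m / p_i^{r_i}. Let s_i be a natural number with s_i·m_i ≡ 1 (mod p_i^{r_i}) for each i. Suppose f_1, ..., f_j are elements of the group ring ℤ_m G such that for each i the reduction of f_i modulo p_i is a unit of ℤ_{p_i}G, and let g_i ∈ ℤ_m G be such that the reduction of f_i·g_i modulo p_i is 1 in ℤ_{p_i}G. Then f = s_1 m_1 f_1 + s_2 m_2 f_2 + ⋯ + s_j m_j f_j is a unit in ℤ_m G, with f^{-1} = s_1 m_1 g_1^{α_1} f_1^{α_1−1} + ⋯ + s_j m_j g_j^{α_j} f_j^{α_j−1}, where α_i = p_i^{r_i−1}. Moreover, |(ℤ_m G)*| = (m/(p_1 p_2 ⋯ p_j))^{|G|} · |(ℤ_{p_1}G)*| · |(ℤ_{p_2}G)*| ⋯ |(ℤ_{p_j}G)*|. -/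

import Mathlib

open MonoidAlgebra in
noncomputable def zmodGroupRingReduce (m n : ℕ) (h : n ∣ m) (G : Type*) [CommGroup G] :
    MonoidAlgebra (ZMod m) G →+* MonoidAlgebra (ZMod n) G :=
  liftNCRingHom (singleOneRingHom.comp (ZMod.castHom h (ZMod n))) (of (ZMod n) G)
    (fun _ _ => Commute.all _ _)

namespace ZmodCRTAux

lemma reduce_single (m n : ℕ) (h : n ∣ m) (G : Type*) [CommGroup G] (a : G) (b : ZMod m) :
    zmodGroupRingReduce m n h G (MonoidAlgebra.single a b)
      = MonoidAlgebra.single a (ZMod.castHom h (ZMod n) b) := by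
  simp [zmodGroupRingReduce, MonoidAlgebra.liftNCRingHom, MonoidAlgebra.singleOneRingHom,
    MonoidAlgebra.of_apply, MonoidAlgebra.single_mul_single]

lemma reduce_apply (m n : ℕ) (h : n ∣ m) (G : Type*) [CommGroup G]
    (x : MonoidAlgebra (ZMod m) G) (γ : G) :
    (zmodGroupRingReduce m n h G x).coeff γ = ZMod.castHom h (ZMod n) (x.coeff γ) := by
  induction x using MonoidAlgebra.induction_linear with
  | zero => simp
  | add a b ha hb => rw [map_add, MonoidAlgebra.coeff_add, MonoidAlgebra.coeff_add, Finsupp.add_apply, Finsupp.add_apply, ha, hb, map_add]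
  | single a b =>
    rw [reduce_single]
    classical
    by_cases hc : a = γ <;>
      simp [MonoidAlgebra.single_apply, Finsupp.single_apply, hc]

lemma reduce_comp (m q n : ℕ) (h1 : q ∣ m) (h2 : n ∣ q) (h3 : n ∣ m) (G : Type*) [CommGroup G]
    (x : MonoidAlgebra (ZMod m) G) :
    zmodGroupRingReduce q n h2 G (zmodGroupRingReduce m q h1 G x)
      = zmodGroupRingReduce m n h3 G x := by
  ext γ
  rw [reduce_apply, reduce_apply, reduce_apply, ← RingHom.comp_apply, ZMod.castHom_comp]

lemma choose_pow_dvd {p n k : ℕ} (hp : p.Prime) (hk : k ≠ 0) (hkn : k ≤ p ^ n) :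
    p ^ (n + 1) ∣ p ^ k * Nat.choose (p ^ n) k := by
  have hch : Nat.choose (p ^ n) k ≠ 0 := (Nat.choose_pos hkn).ne'
  have h1 : (Nat.choose (p ^ n) k).factorization p + k.factorization p = n := by
    have h := hp.emultiplicity_choose_prime_pow_add_emultiplicity hkn hk
    rw [(Nat.finiteMultiplicity_iff.2
        ⟨hp.ne_one, Nat.pos_of_ne_zero hch⟩).emultiplicity_eq_multiplicity,
      (Nat.finiteMultiplicity_iff.2
        ⟨hp.ne_one, Nat.pos_of_ne_zero hk⟩).emultiplicity_eq_multiplicity,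
      Nat.multiplicity_eq_factorization hp hch, Nat.multiplicity_eq_factorization hp hk] at h
    exact_mod_cast h
  have h2 : k.factorization p < k := by
    have hd : p ^ k.factorization p ∣ k := Nat.ordProj_dvd k p
    have hle : p ^ k.factorization p ≤ k := Nat.le_of_dvd (Nat.pos_of_ne_zero hk) hd
    calc k.factorization p < p ^ k.factorization p := Nat.lt_pow_self hp.one_lt
      _ ≤ k := hle
  have h3 : (p ^ k * Nat.choose (p ^ n) k).factorization p
      = k + (Nat.choose (p ^ n) k).factorization p := by
    rw [Nat.factorization_mul (pow_ne_zero _ hp.pos.ne') hch]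
    simp [hp.factorization_pow]
  refine (Nat.Prime.pow_dvd_iff_le_factorization hp
    (Nat.mul_ne_zero (pow_ne_zero _ hp.pos.ne') hch)).2 ?_
  omega

open Finset in
lemma one_add_pow_eq_one {q p : ℕ} {R : Type*} [CommRing R] [Algebra (ZMod q) R]
    (N : ℕ) (hdvd : ∀ k, k ≠ 0 → k ≤ N → q ∣ p ^ k * N.choose k) (C : R) :
    (1 + (p : R) * C) ^ N = 1 := by
  rw [add_pow]
  rw [Finset.sum_eq_single N]
  · simp
  · intro k hk hk0
    have hkN : k ≤ N := Nat.lt_succ_iff.mp (Finset.mem_range.mp hk)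
    have h0 : ((p ^ (N - k) * N.choose (N - k) : ℕ) : R) = 0 := by
      have h1 : ((p ^ (N - k) * N.choose (N - k) : ℕ) : ZMod q) = 0 :=
        (ZMod.natCast_eq_zero_iff _ _).2
          (hdvd (N - k) (by omega) (Nat.sub_le _ _))
      rw [← map_natCast (algebraMap (ZMod q) R), h1, map_zero]
    rw [Nat.choose_symm hkN] at h0
    calc (1:R) ^ k * ((p : R) * C) ^ (N - k) * (Nat.choose N k : R)
        = ((p ^ (N - k) * N.choose k : ℕ) : R) * C ^ (N - k) := by push_cast; ring
      _ = 0 := by rw [h0, zero_mul]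
  · simp

/-- Elements in the kernel of the reduction are multiples of `p`. -/
lemma exists_decomp0 {p q : ℕ} [NeZero q] (hpq : p ∣ q) {G : Type*} [CommGroup G]
    (x : MonoidAlgebra (ZMod q) G) (hx : zmodGroupRingReduce q p hpq G x = 0) :
    ∃ C : MonoidAlgebra (ZMod q) G, x = (p : MonoidAlgebra (ZMod q) G) * C := by
  have hBdvd : ∀ γ : G, p ∣ (x.coeff γ).val := by
    intro γ
    have h1 : ZMod.castHom hpq (ZMod p) (x.coeff γ) = 0 := by
      rw [← reduce_apply, hx]; rfl
    rwa [ZMod.castHom_apply, ← ZMod.natCast_val, ZMod.natCast_eq_zero_iff] at h1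
  set C : MonoidAlgebra (ZMod q) G :=
    MonoidAlgebra.ofCoeff (Finsupp.mapRange (fun b : ZMod q => (((b.val / p : ℕ)) : ZMod q)) (by simp) x.coeff) with hC
  refine ⟨C, ?_⟩
  have halg : (p : MonoidAlgebra (ZMod q) G) = algebraMap (ZMod q) _ (p : ZMod q) := by
    rw [map_natCast]
  rw [halg, ← Algebra.smul_def]
  ext γ
  rw [MonoidAlgebra.coeff_smul_apply, hC, MonoidAlgebra.coeff_ofCoeff, Finsupp.mapRange_apply, smul_eq_mul, ← Nat.cast_mul,
    Nat.mul_div_cancel' (hBdvd γ), ZMod.natCast_rightInverse (x.coeff γ)]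

lemma exists_decomp {p q : ℕ} [NeZero q] (hpq : p ∣ q) {G : Type*} [CommGroup G]
    (y : MonoidAlgebra (ZMod q) G) (hy : zmodGroupRingReduce q p hpq G y = 1) :
    ∃ C : MonoidAlgebra (ZMod q) G, y = 1 + (p : MonoidAlgebra (ZMod q) G) * C := by
  obtain ⟨C, hC⟩ := exists_decomp0 hpq (y - 1) (by rw [map_sub, hy, map_one, sub_self])
  exact ⟨C, by rw [← hC]; ring⟩

/-- key power lemma: if `y` reduces to `1` mod `p`, then `y ^ p ^ (r-1) = 1` in `ℤ_{p^r} G`. -/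
lemma pow_eq_one_of_reduce_eq_one {p r : ℕ} (hp : p.Prime) (hr : 1 ≤ r)
    (hpq : p ∣ p ^ r) {G : Type*} [CommGroup G]
    (y : MonoidAlgebra (ZMod (p ^ r)) G)
    (hy : zmodGroupRingReduce (p ^ r) p hpq G y = 1) :
    y ^ (p ^ (r - 1)) = 1 := by
  haveI : NeZero (p ^ r) := ⟨pow_ne_zero _ hp.pos.ne'⟩
  obtain ⟨C, hC⟩ := exists_decomp hpq y hy
  rw [hC]
  refine one_add_pow_eq_one (q := p ^ r) (p ^ (r - 1)) (fun k hk hkN => ?_) C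
  have : p ^ r = p ^ ((r - 1) + 1) := by congr 1; omega
  rw [this]
  exact choose_pow_dvd hp hk hkN

lemma nat_prod_dvd {ι : Type*} [DecidableEq ι] (t : Finset ι) (q : ι → ℕ) (n : ℕ)
    (hcop : ∀ i ∈ t, ∀ k ∈ t, i ≠ k → Nat.Coprime (q i) (q k))
    (h : ∀ i ∈ t, q i ∣ n) : (∏ i ∈ t, q i) ∣ n := by
  induction t using Finset.induction with
  | empty => simp
  | insert a t' ha ih =>
    rw [Finset.prod_insert ha]
    have hcop' : Nat.Coprime (q a) (∏ i ∈ t', q i) :=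
      Nat.Coprime.prod_right fun i hi =>
        hcop a (Finset.mem_insert_self a t') i (Finset.mem_insert_of_mem hi)
          (fun he => ha (he ▸ hi))
    exact Nat.Coprime.mul_dvd_of_dvd_of_dvd hcop'
      (h a (Finset.mem_insert_self a t'))
      (ih (fun i hi k hk hik => hcop i (Finset.mem_insert_of_mem hi) k
        (Finset.mem_insert_of_mem hk) hik)
        (fun i hi => h i (Finset.mem_insert_of_mem hi)))

end ZmodCRTAux

namespace ZmodCRTAux

lemma zmod_crt_inj {m : ℕ} [NeZero m] {j : ℕ} (q : Fin j → ℕ) (hq : ∀ i, q i ∣ m)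
    (hcop : ∀ i k : Fin j, i ≠ k → Nat.Coprime (q i) (q k)) (hmq : m = ∏ i, q i)
    (a b : ZMod m)
    (h : ∀ i, ZMod.castHom (hq i) (ZMod (q i)) a = ZMod.castHom (hq i) (ZMod (q i)) b) :
    a = b := by
  have hd : ∀ i, q i ∣ (a - b).val := by
    intro i
    have h0 : ZMod.castHom (hq i) (ZMod (q i)) (a - b) = 0 := by
      rw [map_sub, h i, sub_self]
    rwa [ZMod.castHom_apply, ← ZMod.natCast_val, ZMod.natCast_eq_zero_iff] at h0
  have hm : m ∣ (a - b).val := by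
    have hP : (∏ i, q i) ∣ (a - b).val :=
      nat_prod_dvd Finset.univ q _
        (fun i _ k _ hik => hcop i k hik) (fun i _ => hd i)
    rwa [← hmq] at hP
  have : (a - b).val = 0 := Nat.eq_zero_of_dvd_of_lt hm (ZMod.val_lt _)
  have : a - b = 0 := by rwa [← ZMod.val_eq_zero]
  linear_combination this

lemma groupring_crt_inj {m : ℕ} [NeZero m] {j : ℕ} (q : Fin j → ℕ) (hq : ∀ i, q i ∣ m)
    (hcop : ∀ i k : Fin j, i ≠ k → Nat.Coprime (q i) (q k)) (hmq : m = ∏ i, q i)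
    {G : Type*} [CommGroup G] (x y : MonoidAlgebra (ZMod m) G)
    (h : ∀ i, zmodGroupRingReduce m (q i) (hq i) G x = zmodGroupRingReduce m (q i) (hq i) G y) :
    x = y := by
  ext γ
  refine zmod_crt_inj q hq hcop hmq (x.coeff γ) (y.coeff γ) (fun i => ?_)
  rw [← reduce_apply, ← reduce_apply, h i]

end ZmodCRTAux

namespace ZmodCRTAux
def unitsPiEquiv {ι : Type*} (M : ι → Type*) [∀ i, Monoid (M i)] :
    (∀ i, M i)ˣ ≃ ∀ i, (M i)ˣ where
  toFun u i := ⟨u.val i, u.inv i, congrFun u.val_inv i, congrFun u.inv_val i⟩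
  invFun f := ⟨fun i => (f i : M i), fun i => ((f i)⁻¹ : (M i)ˣ),
    funext fun i => Units.mul_inv _, funext fun i => Units.inv_mul _⟩
  left_inv u := Units.ext rfl
  right_inv f := funext fun i => Units.ext rfl

lemma card_ker_zmod {p r : ℕ} (hp : p.Prime) (hr : 1 ≤ r) (hpq : p ∣ p ^ r) :
    Nat.card {a : ZMod (p ^ r) // ZMod.castHom hpq (ZMod p) a = 0} = p ^ (r - 1) := by
  haveI : NeZero (p ^ r) := ⟨pow_ne_zero _ hp.pos.ne'⟩
  have hdvd : ∀ a : ZMod (p ^ r), ZMod.castHom hpq (ZMod p) a = 0 → p ∣ a.val := by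
    intro a ha
    rwa [ZMod.castHom_apply, ← ZMod.natCast_val, ZMod.natCast_eq_zero_iff] at ha
  have hqeq : p ^ r = p * p ^ (r - 1) := by
    rw [← pow_succ']; congr 1; omega
  have hqeq' : p ^ (r - 1) * p = p ^ r := by rw [hqeq, mul_comm]
  have e : {a : ZMod (p ^ r) // ZMod.castHom hpq (ZMod p) a = 0} ≃ Fin (p ^ (r - 1)) := by
    refine
      { toFun := fun a => ⟨a.1.val / p, ?_⟩
        invFun := fun t => ⟨((p * t.1 : ℕ) : ZMod (p ^ r)), ?_⟩
        left_inv := ?_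
        right_inv := ?_ }
    · exact Nat.div_lt_of_lt_mul ((ZMod.val_lt a.1).trans_eq hqeq)
    · rw [map_natCast, ZMod.natCast_eq_zero_iff]
      exact Dvd.dvd.mul_right dvd_rfl _
    · intro a
      apply Subtype.ext
      show ((p * (a.1.val / p) : ℕ) : ZMod (p ^ r)) = a.1
      rw [Nat.mul_div_cancel' (hdvd a.1 a.2)]
      exact ZMod.natCast_rightInverse a.1
    · intro t
      apply Fin.ext
      have hlt : p * t.1 < p ^ r := by
        calc p * t.1 < p * p ^ (r - 1) := Nat.mul_lt_mul_of_pos_left t.2 hp.pos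
          _ = p ^ r := hqeq.symm
      show ((p * t.1 : ℕ) : ZMod (p ^ r)).val / p = t.1
      rw [ZMod.val_natCast_of_lt hlt, Nat.mul_div_cancel_left _ hp.pos]
  rw [Nat.card_congr e, Nat.card_eq_fintype_card, Fintype.card_fin]

lemma reduce_surjective (m n : ℕ) [NeZero n] (h : n ∣ m) (G : Type*) [CommGroup G] :
    Function.Surjective (zmodGroupRingReduce m n h G) := by
  intro y
  refine ⟨MonoidAlgebra.ofCoeff (Finsupp.mapRange (fun a : ZMod n => ((a.val : ℕ) : ZMod m)) (by simp) y.coeff), ?_⟩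
  ext γ
  rw [reduce_apply, MonoidAlgebra.coeff_ofCoeff, Finsupp.mapRange_apply, map_natCast, ZMod.natCast_rightInverse]

lemma card_units_prime_pow {p r : ℕ} (hp : p.Prime) (hr : 1 ≤ r) (hpq : p ∣ p ^ r)
    {G : Type*} [CommGroup G] [Finite G] :
    Nat.card (MonoidAlgebra (ZMod (p ^ r)) G)ˣ
      = (p ^ (r - 1)) ^ Nat.card G * Nat.card (MonoidAlgebra (ZMod p) G)ˣ := by
  haveI : NeZero (p ^ r) := ⟨pow_ne_zero _ hp.pos.ne'⟩
  haveI : NeZero p := ⟨hp.pos.ne'⟩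
  set R := MonoidAlgebra (ZMod (p ^ r)) G with hR
  set ψ := zmodGroupRingReduce (p ^ r) p hpq G with hψ
  have hnil : ∀ x : R, ψ x = 0 → IsNilpotent x := by
    intro x hx
    obtain ⟨C, hC⟩ := exists_decomp0 hpq x hx
    refine ⟨r, ?_⟩
    rw [hC, mul_pow, ← Nat.cast_pow]
    have h0 : ((p ^ r : ℕ) : R) = 0 := by
      rw [← map_natCast (algebraMap (ZMod (p ^ r)) R), ZMod.natCast_self, map_zero]
    rw [h0, zero_mul]
  have hker_unit : ∀ x : R, ψ x = 0 → IsUnit (1 + x) := by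
    intro x hx
    have h1 := (hnil x hx).neg.isUnit_one_sub
    simpa using h1
  set φ : Rˣ →* (MonoidAlgebra (ZMod p) G)ˣ := Units.map ψ.toMonoidHom with hφ
  have hψsurj : Function.Surjective ψ := reduce_surjective _ _ hpq G
  have hφsurj : Function.Surjective φ := by
    intro u
    obtain ⟨x, hx⟩ := hψsurj (u : MonoidAlgebra (ZMod p) G)
    obtain ⟨y, hy⟩ := hψsurj ((u⁻¹ : (MonoidAlgebra (ZMod p) G)ˣ) : MonoidAlgebra (ZMod p) G)
    have h1 : ψ (x * y) = 1 := by
      rw [map_mul, hx, hy]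
      exact_mod_cast u.mul_inv
    have h2 : IsUnit (x * y) := by
      have h3 : ψ (x * y - 1) = 0 := by rw [map_sub, h1, map_one, sub_self]
      have h4 := hker_unit _ h3
      simpa using h4
    obtain ⟨v, hv⟩ := isUnit_of_mul_isUnit_left h2
    refine ⟨v, Units.ext ?_⟩
    show ψ (v : R) = (u : MonoidAlgebra (ZMod p) G)
    rw [hv, hx]
  have hcard1 : Nat.card Rˣ = Nat.card (Rˣ ⧸ φ.ker) * Nat.card φ.ker :=
    Subgroup.card_eq_card_quotient_mul_card_subgroup φ.ker
  have hquot : Nat.card (Rˣ ⧸ φ.ker) = Nat.card (MonoidAlgebra (ZMod p) G)ˣ :=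
    Nat.card_congr (QuotientGroup.quotientKerEquivOfSurjective φ hφsurj).toEquiv
  have hker : Nat.card φ.ker = (p ^ (r - 1)) ^ Nat.card G := by
    have e1 : φ.ker ≃ {x : R // ψ x = 0} := by
      refine Equiv.ofBijective (fun u => ⟨((u : Rˣ) : R) - 1, ?_⟩) ⟨?_, ?_⟩
      · have h5 : ψ ((u : Rˣ) : R) = 1 := by
          have h6 := u.2
          rw [MonoidHom.mem_ker] at h6
          exact congrArg Units.val h6
        rw [map_sub, h5, map_one, sub_self]
      · intro u v huv
        have h7 : ((u : Rˣ) : R) = ((v : Rˣ) : R) := by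
          have := congrArg Subtype.val huv
          simpa using this
        exact Subtype.ext (Units.ext h7)
      · rintro ⟨x, hx⟩
        have h8 := hker_unit x hx
        refine ⟨⟨h8.unit, ?_⟩, ?_⟩
        · rw [MonoidHom.mem_ker]
          apply Units.ext
          show ψ ((h8.unit : R)) = 1
          rw [h8.unit_spec, map_add, map_one, hx, add_zero]
        · apply Subtype.ext
          show ((h8.unit : R)) - 1 = x
          rw [h8.unit_spec]
          ring
    have e2 : {x : R // ψ x = 0}
        ≃ (G → {a : ZMod (p ^ r) // ZMod.castHom hpq (ZMod p) a = 0}) := by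
      refine
        { toFun := fun x γ => ⟨x.1.coeff γ, ?_⟩
          invFun := fun F => ⟨MonoidAlgebra.ofCoeff (Finsupp.equivFunOnFinite.symm (fun γ => (F γ).1)), ?_⟩
          left_inv := ?_
          right_inv := ?_ }
      · rw [← reduce_apply (p ^ r) p hpq G x.1 γ, x.2]
        rfl
      · ext γ
        rw [reduce_apply]
        show ZMod.castHom hpq (ZMod p) ((MonoidAlgebra.ofCoeff (Finsupp.equivFunOnFinite.symm fun γ => (F γ).1)).coeff γ) = 0
        rw [MonoidAlgebra.coeff_ofCoeff, Finsupp.coe_equivFunOnFinite_symm]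
        exact (F γ).2
      · intro x
        apply Subtype.ext
        ext γ
        exact congrFun (Finsupp.coe_equivFunOnFinite_symm _) γ
      · intro F
        funext γ
        apply Subtype.ext
        exact congrFun (Finsupp.coe_equivFunOnFinite_symm _) γ
    rw [Nat.card_congr (e1.trans e2), Nat.card_fun, card_ker_zmod hp hr hpq]
  rw [hcard1, hquot, hker, mul_comm]

end ZmodCRTAux
open ZmodCRTAux in
theorem zmod_groupRing_unit_crt {G : Type*} [CommGroup G] [Finite G]
    (m : ℕ) (hm2 : 2 ≤ m) (j : ℕ) (p r : Fin j → ℕ)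
    (hp : ∀ i, (p i).Prime) (hpinj : Function.Injective p)
    (hr : ∀ i, 1 ≤ r i) (hm : m = ∏ i, p i ^ r i)
    (hdvd : ∀ i, p i ∣ m)
    (s : Fin j → ℕ) (hs : ∀ i, s i * (m / p i ^ r i) ≡ 1 [MOD p i ^ r i])
    (f g : Fin j → MonoidAlgebra (ZMod m) G)
    (hf : ∀ i, IsUnit (zmodGroupRingReduce m (p i) (hdvd i) G (f i)))
    (hg : ∀ i, zmodGroupRingReduce m (p i) (hdvd i) G (f i * g i) = 1) :
    IsUnit (∑ i, (s i * (m / p i ^ r i)) • f i) ∧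
    (∑ i, (s i * (m / p i ^ r i)) • f i) *
      (∑ i, (s i * (m / p i ^ r i)) •
        (g i ^ (p i ^ (r i - 1)) * f i ^ (p i ^ (r i - 1) - 1))) = 1 ∧
    Nat.card (MonoidAlgebra (ZMod m) G)ˣ =
      (m / ∏ i, p i) ^ Nat.card G * ∏ i, Nat.card (MonoidAlgebra (ZMod (p i)) G)ˣ := by
  classical
  haveI : NeZero m := ⟨by omega⟩
  have hq : ∀ i, p i ^ r i ∣ m := fun i => hm ▸ Finset.dvd_prod_of_mem _ (Finset.mem_univ i)
  have hpq : ∀ i, p i ∣ p i ^ r i := fun i => dvd_pow_self (p i) (by have := hr i; omega)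
  have hqpos : ∀ i, 0 < p i ^ r i := fun i => pow_pos (hp i).pos _
  have hcop : ∀ i k : Fin j, i ≠ k → Nat.Coprime (p i ^ r i) (p k ^ r k) := fun i k hik =>
    Nat.Coprime.pow _ _ ((Nat.coprime_primes (hp i) (hp k)).2 (fun he => hik (hpinj he)))
  have hmk : ∀ k, m / p k ^ r k = ∏ l ∈ Finset.univ.erase k, p l ^ r l := by
    intro k
    have h1 : m = p k ^ r k * ∏ l ∈ Finset.univ.erase k, p l ^ r l := by
      rw [hm, ← Finset.mul_prod_erase Finset.univ _ (Finset.mem_univ k)]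
    rw [h1, Nat.mul_div_cancel_left _ (hqpos k)]
  -- reduction of the CRT sums
  have hsum : ∀ (x : Fin j → MonoidAlgebra (ZMod m) G) (i : Fin j),
      zmodGroupRingReduce m (p i ^ r i) (hq i) G (∑ k, (s k * (m / p k ^ r k)) • x k)
        = zmodGroupRingReduce m (p i ^ r i) (hq i) G (x i) := by
    intro x i
    have hzero : ∀ k ∈ Finset.univ, k ≠ i →
        zmodGroupRingReduce m (p i ^ r i) (hq i) G ((s k * (m / p k ^ r k)) • x k) = 0 := by
      intro k _ hk
      rw [map_nsmul, nsmul_eq_mul]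
      have hdd : p i ^ r i ∣ s k * (m / p k ^ r k) := by
        refine Dvd.dvd.mul_left ?_ _
        rw [hmk k]
        exact Finset.dvd_prod_of_mem _ (Finset.mem_erase.2 ⟨Ne.symm hk, Finset.mem_univ i⟩)
      have h0 : ((s k * (m / p k ^ r k) : ℕ) : MonoidAlgebra (ZMod (p i ^ r i)) G) = 0 := by
        rw [← map_natCast (algebraMap (ZMod (p i ^ r i)) (MonoidAlgebra (ZMod (p i ^ r i)) G)),
          (ZMod.natCast_eq_zero_iff _ _).2 hdd, map_zero]
      rw [h0, zero_mul]
    have h1 : ((s i * (m / p i ^ r i) : ℕ) : MonoidAlgebra (ZMod (p i ^ r i)) G) = 1 := by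
      rw [← map_natCast (algebraMap (ZMod (p i ^ r i)) (MonoidAlgebra (ZMod (p i ^ r i)) G))]
      have h2 : ((s i * (m / p i ^ r i) : ℕ) : ZMod (p i ^ r i)) = ((1:ℕ) : ZMod (p i ^ r i)) :=
        (ZMod.natCast_eq_natCast_iff _ _ _).2 (hs i)
      rw [h2, Nat.cast_one, map_one]
    rw [map_sum, Finset.sum_eq_single_of_mem i (Finset.mem_univ i) hzero,
      map_nsmul, nsmul_eq_mul, h1, one_mul]
  -- the product is 1
  have hFF' : (∑ i, (s i * (m / p i ^ r i)) • f i) *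
      (∑ i, (s i * (m / p i ^ r i)) •
        (g i ^ (p i ^ (r i - 1)) * f i ^ (p i ^ (r i - 1) - 1))) = 1 := by
    refine groupring_crt_inj _ hq hcop hm _ _ (fun i => ?_)
    rw [map_one, map_mul, hsum f i,
      hsum (fun k => g k ^ (p k ^ (r k - 1)) * f k ^ (p k ^ (r k - 1) - 1)) i]
    have hα : 1 ≤ p i ^ (r i - 1) := Nat.one_le_pow _ _ (hp i).pos
    rw [map_mul, map_pow, map_pow]
    set a := zmodGroupRingReduce m (p i ^ r i) (hq i) G (f i) with ha
    set b := zmodGroupRingReduce m (p i ^ r i) (hq i) G (g i) with hb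
    have hab : (a * b) ^ (p i ^ (r i - 1)) = 1 := by
      refine pow_eq_one_of_reduce_eq_one (hp i) (hr i) (hpq i) _ ?_
      rw [ha, hb, ← map_mul, reduce_comp m (p i ^ r i) (p i) (hq i) (hpq i) (hdvd i)]
      exact hg i
    calc a * (b ^ (p i ^ (r i - 1)) * a ^ (p i ^ (r i - 1) - 1))
        = (a * a ^ (p i ^ (r i - 1) - 1)) * b ^ (p i ^ (r i - 1)) := by ring
      _ = a ^ (p i ^ (r i - 1)) * b ^ (p i ^ (r i - 1)) := by
          have h3 : p i ^ (r i - 1) - 1 + 1 = p i ^ (r i - 1) := by omega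
          rw [← pow_succ' a (p i ^ (r i - 1) - 1), h3]
      _ = (a * b) ^ (p i ^ (r i - 1)) := (mul_pow a b _).symm
      _ = 1 := hab
  refine ⟨IsUnit.of_mul_eq_one _ hFF', hFF', ?_⟩
  -- Part 3: cardinality of the unit group
  haveI : ∀ i, NeZero (p i ^ r i) := fun i => ⟨(hqpos i).ne'⟩
  have heinj : Function.Injective
      (Pi.ringHom fun i => ZMod.castHom (hq i) (ZMod (p i ^ r i))) := by
    intro a b hab
    exact zmod_crt_inj _ hq hcop hm a b (fun i => congrFun hab i)
  have hebij : Function.Bijective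
      (Pi.ringHom fun i => ZMod.castHom (hq i) (ZMod (p i ^ r i))) := by
    rw [Fintype.bijective_iff_injective_and_card]
    refine ⟨heinj, ?_⟩
    simp only [Fintype.card_pi, ZMod.card]
    exact hm
  have hΦinj : Function.Injective
      (Pi.ringHom fun i => zmodGroupRingReduce m (p i ^ r i) (hq i) G) := by
    intro x y hxy
    exact groupring_crt_inj _ hq hcop hm x y (fun i => congrFun hxy i)
  have hΦsurj : Function.Surjective
      (Pi.ringHom fun i => zmodGroupRingReduce m (p i ^ r i) (hq i) G) := by
    intro Y
    refine ⟨MonoidAlgebra.ofCoeff (Finsupp.equivFunOnFinite.symm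
      (fun γ => (Equiv.ofBijective _ hebij).symm (fun i => (Y i).coeff γ))), ?_⟩
    funext i
    ext γ
    show (zmodGroupRingReduce m (p i ^ r i) (hq i) G
      (MonoidAlgebra.ofCoeff (Finsupp.equivFunOnFinite.symm
        (fun γ => (Equiv.ofBijective _ hebij).symm (fun i => (Y i).coeff γ))))).coeff γ = (Y i).coeff γ
    rw [reduce_apply, MonoidAlgebra.coeff_ofCoeff, Finsupp.coe_equivFunOnFinite_symm]
    exact congrFun ((Equiv.ofBijective _ hebij).apply_symm_apply (fun i => (Y i).coeff γ)) i
  have hcards : Nat.card (MonoidAlgebra (ZMod m) G)ˣ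
      = ∏ i, Nat.card (MonoidAlgebra (ZMod (p i ^ r i)) G)ˣ := by
    rw [Nat.card_congr ((Units.mapEquiv
      (RingEquiv.ofBijective _ ⟨hΦinj, hΦsurj⟩).toMulEquiv).toEquiv.trans (unitsPiEquiv _))]
    exact Nat.card_pi
  have h10 : ∏ i, Nat.card (MonoidAlgebra (ZMod (p i ^ r i)) G)ˣ
      = ∏ i, ((p i ^ (r i - 1)) ^ Nat.card G * Nat.card (MonoidAlgebra (ZMod (p i)) G)ˣ) :=
    Finset.prod_congr rfl (fun i _ => card_units_prime_pow (hp i) (hr i) (hpq i))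
  have hmdiv : m / ∏ i, p i = ∏ i, p i ^ (r i - 1) := by
    have h9 : m = (∏ i, p i ^ (r i - 1)) * ∏ i, p i := by
      rw [hm, ← Finset.prod_mul_distrib]
      exact Finset.prod_congr rfl
        (fun i _ => by rw [← pow_succ]; congr 1; have := hr i; omega)
    rw [h9, Nat.mul_div_cancel _ (Finset.prod_pos (fun i _ => (hp i).pos))]
  rw [hcards, h10, Finset.prod_mul_distrib, Finset.prod_pow, hmdiv]
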